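/- Let r be a regular reward function, p ∈ (0,1), s := 1/(1−p), and ω := η_s^{-1}. Define T(c) := Σ_{i=1}^∞ p(1−p)^{i−1} r(κ̄_s^{(i−1)}(ω(c))) for c ≥ 0. Then for Lebesgue-almost every c > 0, T is differentiable at c with T'(c) = p·r'(ω(c)). -/

import Mathlib

open Set Filter MeasureTheory

/-- A regular reward function `r` with derivative `r'`: `r : [0,∞) → [0,∞)` is
nondecreasing, Lipschitz, strictly concave, differentiable, with `r 0 = 0`; its
derivative `r'` is continuous, strictly decreasing, positive, and tends to `0` at `+∞`.
For each `s ≥ 1`, `τ s` is the unique point with `r' (τ s) = r' 0 / s`, and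
`κ s : [τ s, ∞) → [0, ∞)` is defined by the relation `r' (κ s x) = s * r' x`
(for `s = 1` these reduce to `τ 1 = 0` and `κ 1 = id`); regularity means `κ s` is
convex on `[τ s, ∞)` for all `s > 1`. -/
structure RegularReward where
  r : ℝ → ℝ
  r' : ℝ → ℝ
  r_zero : r 0 = 0
  r_nonneg : ∀ x : ℝ, 0 ≤ x → 0 ≤ r x
  r_mono : MonotoneOn r (Ici (0 : ℝ))
  r_lip : ∃ K : NNReal, LipschitzOnWith K r (Ici (0 : ℝ))
  r_strictConcave : StrictConcaveOn ℝ (Ici (0 : ℝ)) r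
  r_hasDeriv : ∀ x : ℝ, 0 ≤ x → HasDerivWithinAt r (r' x) (Ici (0 : ℝ)) x
  deriv_cont : ContinuousOn r' (Ici (0 : ℝ))
  deriv_strictAnti : StrictAntiOn r' (Ici (0 : ℝ))
  deriv_pos : ∀ x : ℝ, 0 ≤ x → 0 < r' x
  deriv_tendsto_zero : Tendsto r' atTop (nhds 0)
  τ : ℝ → ℝ
  κ : ℝ → ℝ → ℝ
  τ_nonneg : ∀ s : ℝ, 1 ≤ s → 0 ≤ τ s
  τ_spec : ∀ s : ℝ, 1 ≤ s → r' (τ s) = r' 0 / s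
  κ_nonneg : ∀ s : ℝ, 1 ≤ s → ∀ x : ℝ, τ s ≤ x → 0 ≤ κ s x
  κ_spec : ∀ s : ℝ, 1 ≤ s → ∀ x : ℝ, τ s ≤ x → r' (κ s x) = s * r' x
  κ_convex : ∀ s : ℝ, 1 < s → ConvexOn ℝ (Ici (τ s)) (κ s)

namespace RegularReward

/-- The extension `κ̄_s (x) := κ_s (max x τ_s)` of `κ_s` to `[0, ∞)`. -/
noncomputable def kbar (R : RegularReward) (s : ℝ) (x : ℝ) : ℝ :=
  R.κ s (max x (R.τ s))

/-- `M_s(x) = ⌈ln (r' 0 / r' x) / ln s⌉`. -/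
noncomputable def M (R : RegularReward) (s : ℝ) (x : ℝ) : ℕ :=
  ⌈Real.log (R.r' 0 / R.r' x) / Real.log s⌉₊

/-- `M̃_s(x) = ⌊ln (r' 0 / r' x) / ln s⌋ + 1`. -/
noncomputable def Mt (R : RegularReward) (s : ℝ) (x : ℝ) : ℕ :=
  ⌊Real.log (R.r' 0 / R.r' x) / Real.log s⌋₊ + 1

/-- `η_s(x) := ∑_{i=1}^∞ κ̄_s^{(i-1)}(x)`, a finite sum since `κ̄_s^{(i)}(x) = 0` for
`i ≥ M_s(x)`. -/
noncomputable def η (R : RegularReward) (s : ℝ) (x : ℝ) : ℝ :=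
  ∑' i : ℕ, (R.kbar s)^[i] x

end RegularReward


section Aux

variable {R : RegularReward} {s : ℝ}

lemma tau_pos (hs1 : 1 < s) : 0 < R.τ s := by
  rcases lt_or_eq_of_le (R.τ_nonneg s hs1.le) with h | h
  · exact h
  · exfalso
    have h0 := R.deriv_pos 0 le_rfl
    have hspec := R.τ_spec s hs1.le
    rw [← h] at hspec
    have hlt := div_lt_self h0 hs1
    rw [← hspec] at hlt
    exact lt_irrefl _ hlt

lemma kappa_tau (hs1 : 1 < s) : R.κ s (R.τ s) = 0 := by
  have hs0 : (0:ℝ) < s := lt_trans one_pos hs1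
  have h := R.κ_spec s hs1.le (R.τ s) le_rfl
  rw [R.τ_spec s hs1.le] at h
  have hmul : s * (R.r' 0 / s) = R.r' 0 := by field_simp
  rw [hmul] at h
  exact R.deriv_strictAnti.injOn (R.κ_nonneg s hs1.le (R.τ s) le_rfl) (le_refl (0:ℝ)) h

lemma kbar_nonneg (hs1 : 1 < s) (x : ℝ) : 0 ≤ R.kbar s x :=
  R.κ_nonneg s hs1.le _ (le_max_right _ _)

lemma kbar_eq_zero (hs1 : 1 < s) {x : ℝ} (hx : x ≤ R.τ s) : R.kbar s x = 0 := by
  unfold RegularReward.kbar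
  rw [max_eq_right hx]
  exact kappa_tau hs1

lemma kbar_zero (hs1 : 1 < s) : R.kbar s 0 = 0 :=
  kbar_eq_zero hs1 (R.τ_nonneg s hs1.le)

lemma kbar_of_ge (hs1 : 1 < s) {x : ℝ} (hx : R.τ s ≤ x) : R.kbar s x = R.κ s x := by
  unfold RegularReward.kbar
  rw [max_eq_left hx]

lemma kbar_mono (hs1 : 1 < s) : Monotone (R.kbar s) := by
  intro x y hxy
  unfold RegularReward.kbar
  set a := max x (R.τ s) with ha'
  set b := max y (R.τ s) with hb'
  have hab : a ≤ b := max_le_max hxy le_rfl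
  have ha : R.τ s ≤ a := le_max_right _ _
  have hb : R.τ s ≤ b := le_max_right _ _
  rcases eq_or_lt_of_le hab with h | h
  · rw [h]
  · have h0 : (0:ℝ) ≤ R.τ s := R.τ_nonneg s hs1.le
    have hs0 : (0:ℝ) < s := lt_trans one_pos hs1
    have hr : R.r' (R.κ s b) < R.r' (R.κ s a) := by
      rw [R.κ_spec s hs1.le a ha, R.κ_spec s hs1.le b hb]
      have hlt := R.deriv_strictAnti (h0.trans ha) (h0.trans hb) h
      nlinarith
    by_contra hc
    push_neg at hc
    have := R.deriv_strictAnti (R.κ_nonneg s hs1.le b hb) (R.κ_nonneg s hs1.le a ha) hc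
    linarith

lemma iter_nonneg (hs1 : 1 < s) (j : ℕ) (y : ℝ) (hy : 0 ≤ y) : 0 ≤ (R.kbar s)^[j] y := by
  cases j with
  | zero => exact hy
  | succ n =>
    rw [Function.iterate_succ_apply']
    exact kbar_nonneg hs1 _

lemma chain_eq (hs1 : 1 < s) : ∀ (j : ℕ) (y : ℝ), (∀ i < j, R.τ s ≤ (R.kbar s)^[i] y) →
    R.r' ((R.kbar s)^[j] y) = s ^ j * R.r' y := by
  intro j
  induction j with
  | zero => intro y _; simp
  | succ n ih =>
    intro y h
    rw [Function.iterate_succ_apply']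
    have hn : R.τ s ≤ (R.kbar s)^[n] y := h n (Nat.lt_succ_self n)
    have hkb : R.kbar s ((R.kbar s)^[n] y) = R.κ s ((R.kbar s)^[n] y) := kbar_of_ge hs1 hn
    rw [hkb, R.κ_spec s hs1.le _ hn, ih y (fun i hi => h i (Nat.lt_succ_of_lt hi))]
    ring

lemma exists_small (hs1 : 1 < s) (y : ℝ) (hy : 0 ≤ y) : ∃ j, (R.kbar s)^[j] y < R.τ s := by
  by_contra hc
  push_neg at hc
  have hy' : 0 < R.r' y := R.deriv_pos y hy
  obtain ⟨n, hn⟩ := pow_unbounded_of_one_lt (R.r' 0 / R.r' y) hs1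
  have hchain := chain_eq hs1 n y (fun i _ => hc i)
  have h0 : (0:ℝ) ≤ R.τ s := R.τ_nonneg s hs1.le
  have hle : R.r' ((R.kbar s)^[n] y) ≤ R.r' 0 := by
    rcases eq_or_lt_of_le (h0.trans (hc n)) with h | h
    · rw [← h]
    · exact (R.deriv_strictAnti (le_refl (0:ℝ)) (le_of_lt h) h).le
  rw [hchain] at hle
  rw [div_lt_iff₀ hy'] at hn
  linarith

lemma iter_zero_after (hs1 : 1 < s) (y : ℝ) (j : ℕ) (h : (R.kbar s)^[j] y < R.τ s) :
    ∀ k, j < k → (R.kbar s)^[k] y = 0 := by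
  intro k hk
  have h1 : (R.kbar s)^[j + 1] y = 0 := by
    rw [Function.iterate_succ_apply']
    exact kbar_eq_zero hs1 h.le
  have hkeq : k = (k - (j + 1)) + (j + 1) := by omega
  rw [hkeq, Function.iterate_add_apply, h1, Function.iterate_fixed (kbar_zero hs1)]

lemma summable_iter (hs1 : 1 < s) (y : ℝ) (hy : 0 ≤ y) :
    Summable (fun i => (R.kbar s)^[i] y) := by
  obtain ⟨j, hj⟩ := exists_small hs1 y hy
  apply summable_of_ne_finset_zero (s := Finset.range (j + 1))
  intro i hi
  rw [Finset.mem_range, not_lt] at hi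
  exact iter_zero_after hs1 y j hj i (by omega)

end Aux

open Topology

/-- **Derivative of the Bernoulli optimal reward in the capacity** (Lemma 3). Let `r` be
a regular reward function, `p ∈ (0,1)`, `s = 1/(1-p)`, `ω = η_s⁻¹`, and let
`T(c) := ∑_{i=1}^∞ p (1-p)^{i-1} r (κ̄_s^{(i-1)}(ω c))` be the asymptotic expected
average reward of `ω` under Bernoulli arrivals with battery capacity `c`. Then for
Lebesgue-almost every `c > 0`, `T` is differentiable at `c` with
`T'(c) = p · r'(ω c)`. -/
theorem bernoulli_reward_deriv (R : RegularReward) (p : ℝ) (hp : p ∈ Set.Ioo (0 : ℝ) 1)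
    (s : ℝ) (hs : s = 1 / (1 - p))
    (ω : ℝ → ℝ)
    (hω_nonneg : ∀ x : ℝ, 0 ≤ x → 0 ≤ ω x)
    (hω_rightInv : ∀ x : ℝ, 0 ≤ x → R.η s (ω x) = x)
    (hω_leftInv : ∀ y : ℝ, 0 ≤ y → ω (R.η s y) = y) :
    ∀ᵐ c ∂(MeasureTheory.volume.restrict (Set.Ioi (0 : ℝ))),
      HasDerivAt (fun c : ℝ => ∑' i : ℕ, p * (1 - p) ^ i * R.r ((R.kbar s)^[i] (ω c)))
        (p * R.r' (ω c)) c := by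
  classical
  obtain ⟨hp0, hp1⟩ := hp
  have h1p : 0 < 1 - p := by linarith
  have hs1 : 1 < s := by
    rw [hs, lt_div_iff₀ h1p]
    linarith
  have hps : (1 - p) * s = 1 := by
    rw [hs]
    field_simp
  -- monotonicity of ω on [0, ∞)
  have hηlt : ∀ a b : ℝ, 0 ≤ a → a < b → R.η s a < R.η s b := by
    intro a b ha hab
    have hb : (0:ℝ) ≤ b := ha.trans hab.le
    unfold RegularReward.η
    refine Summable.tsum_lt_tsum (i := 0) (fun i => ((kbar_mono hs1).iterate i) hab.le) ?_
      (summable_iter hs1 a ha) (summable_iter hs1 b hb)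
    simpa using hab
  have hωmono : ∀ x y : ℝ, 0 ≤ x → x ≤ y → ω x ≤ ω y := by
    intro x y hx hxy
    by_contra hc
    push_neg at hc
    have := hηlt (ω y) (ω x) (hω_nonneg y (hx.trans hxy)) hc
    rw [hω_rightInv x hx, hω_rightInv y (hx.trans hxy)] at this
    linarith
  set f : ℕ → ℝ → ℝ := fun j c => (R.kbar s)^[j] (ω (max c 0)) with hfdef
  have hfmono : ∀ j, Monotone (f j) := by
    intro j
    have hm : Monotone fun c : ℝ => ω (max c 0) := fun a b hab =>
      hωmono _ _ (le_max_right _ _) (max_le_max hab le_rfl)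
    exact ((kbar_mono hs1).iterate j).comp hm
  have hae : ∀ᵐ c : ℝ, ∀ j, DifferentiableAt ℝ (f j) c :=
    MeasureTheory.ae_all_iff.2 fun j => (hfmono j).ae_differentiableAt
  filter_upwards [MeasureTheory.ae_restrict_of_ae hae,
    MeasureTheory.ae_restrict_mem measurableSet_Ioi] with c hdiff hc
  have hcpos : (0:ℝ) < c := hc
  have hmem : Ioi (0:ℝ) ∈ 𝓝 c := Ioi_mem_nhds hcpos
  set g : ℕ → ℝ → ℝ := fun j c' => (R.kbar s)^[j] (ω c') with hgdef
  have hfg : ∀ j, f j =ᶠ[𝓝 c] g j := by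
    intro j
    filter_upwards [hmem] with x hx
    simp only [f, g, max_eq_left (le_of_lt (α := ℝ) hx)]
  have hgdiff : ∀ j, DifferentiableAt ℝ (g j) c := fun j =>
    ((hfg j).differentiableAt_iff).mp (hdiff j)
  have hωc : (0:ℝ) ≤ ω c := hω_nonneg c hcpos.le
  have hex : ∃ j, g j c < R.τ s := exists_small hs1 (ω c) hωc
  set m := Nat.find hex with hmdef
  have hmlt : g m c < R.τ s := Nat.find_spec hex
  have hmge : ∀ i < m, R.τ s ≤ g i c := fun i hi => le_of_not_gt (Nat.find_min hex hi)
  have hchain : ∀ j ≤ m, R.r' (g j c) = s ^ j * R.r' (ω c) := fun j hj =>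
    chain_eq hs1 j (ω c) (fun i hi => hmge i (lt_of_lt_of_le hi hj))
  have hUτ : ∀ᶠ c' in 𝓝 c, g m c' < R.τ s :=
    (hgdiff m).continuousAt.preimage_mem_nhds (Iio_mem_nhds hmlt)
  set d : ℕ → ℝ := fun j => deriv (g j) c with hddef
  have hgd : ∀ j, HasDerivAt (g j) (d j) c := fun j => (hgdiff j).hasDerivAt
  -- the sum of the g j equals the identity near c
  have hsum_id : (fun c' => ∑ j ∈ Finset.range (m + 1), g j c') =ᶠ[𝓝 c] id := by
    filter_upwards [hmem, hUτ] with x hx hxτ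
    have hx0 : (0:ℝ) ≤ x := le_of_lt hx
    have hzero : ∀ j ∉ Finset.range (m + 1), g j x = 0 := by
      intro j hj
      rw [Finset.mem_range, not_lt] at hj
      exact iter_zero_after hs1 (ω x) m hxτ j (by omega)
    have heq : R.η s (ω x) = ∑ j ∈ Finset.range (m + 1), g j x := tsum_eq_sum hzero
    have := hω_rightInv x hx0
    simp only [id_eq]
    rw [← heq, this]
  have hD1 : HasDerivAt (fun c' => ∑ j ∈ Finset.range (m + 1), g j c') 1 c :=
    (hasDerivAt_id c).congr_of_eventuallyEq hsum_id
  have hD2 : HasDerivAt (fun c' => ∑ j ∈ Finset.range (m + 1), g j c')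
      (∑ j ∈ Finset.range (m + 1), d j) c :=
    HasDerivAt.fun_sum fun j _ => hgd j
  have hsum_d : ∑ j ∈ Finset.range (m + 1), d j = 1 := hD2.unique hD1
  -- derivative of each term
  have hterm : ∀ j, HasDerivAt (fun c' => R.r (g j c')) (R.r' (g j c) * d j) c := by
    intro j
    have hr : HasDerivWithinAt R.r (R.r' (g j c)) (Ici 0) (g j c) :=
      R.r_hasDeriv _ (iter_nonneg hs1 j (ω c) hωc)
    have hmap : MapsTo (g j) (Ioi 0) (Ici 0) := fun x hx =>
      iter_nonneg hs1 j (ω x) (hω_nonneg x (le_of_lt hx))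
    exact (hr.comp c (hgd j).hasDerivWithinAt hmap).hasDerivAt hmem
  have hDT : HasDerivAt (fun c' => ∑ j ∈ Finset.range (m + 1), p * (1 - p) ^ j * R.r (g j c'))
      (∑ j ∈ Finset.range (m + 1), p * (1 - p) ^ j * (R.r' (g j c) * d j)) c :=
    HasDerivAt.fun_sum fun j _ => (hterm j).const_mul (p * (1 - p) ^ j)
  have hval : ∑ j ∈ Finset.range (m + 1), p * (1 - p) ^ j * (R.r' (g j c) * d j)
      = p * R.r' (ω c) := by
    have hcg : ∀ j ∈ Finset.range (m + 1),
        p * (1 - p) ^ j * (R.r' (g j c) * d j) = p * R.r' (ω c) * d j := by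
      intro j hj
      rw [Finset.mem_range] at hj
      rw [hchain j (by omega)]
      have hpow : (1 - p) ^ j * s ^ j = 1 := by
        rw [← mul_pow, hps, one_pow]
      calc p * (1 - p) ^ j * (s ^ j * R.r' (ω c) * d j)
          = p * ((1 - p) ^ j * s ^ j) * (R.r' (ω c) * d j) := by ring
        _ = p * R.r' (ω c) * d j := by rw [hpow]; ring
    rw [Finset.sum_congr rfl hcg, ← Finset.mul_sum, hsum_d, mul_one]
  have hTeq : (fun c' : ℝ => ∑' i : ℕ, p * (1 - p) ^ i * R.r ((R.kbar s)^[i] (ω c'))) =ᶠ[𝓝 c]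
      (fun c' => ∑ j ∈ Finset.range (m + 1), p * (1 - p) ^ j * R.r (g j c')) := by
    filter_upwards [hmem, hUτ] with x hx hxτ
    apply tsum_eq_sum
    intro j hj
    rw [Finset.mem_range, not_lt] at hj
    have hz : (R.kbar s)^[j] (ω x) = 0 := iter_zero_after hs1 (ω x) m hxτ j (by omega)
    rw [hz, R.r_zero, mul_zero]
  rw [← hval]
  exact hDT.congr_of_eventuallyEq hTeq
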